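/- Fix integers s ≥ 2, k ≥ max{2, s²-2s}, m ≥ k+2, and an integer α with 0 ≤ α ≤ k-s, and let β = ((s-1)(k-s+1) - α(s-1)) / ((k+1)(k-s+1) - α(s-1)). Define g(i) = (k+1)(s-1-β)/s + (binom(i,s-1)/binom(k,s-1))·((1-(s-1)β)(i-s+1)/s + β(k-s+2)). Then g(i) ≥ i for every integer i with k ≤ i ≤ m. -/

import Mathlib

set_option maxHeartbeats 800000


/-- With `β` as in the main theorem, the coefficient function
`g(i) = (k+1)(s-1-β)/s + (C(i,s-1)/C(k,s-1))·((1-(s-1)β)(i-s+1)/s + β(k-s+2))`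
satisfies `g(i) ≥ i` for every integer `i` with `k ≤ i ≤ m`, where `m ≥ k+2`. -/
theorem stmt_11 (s k m α : ℕ) (hs : 2 ≤ s) (hk : max 2 (s ^ 2 - 2 * s) ≤ k)
    (hm : k + 2 ≤ m) (hα : α ≤ k - s)
    (β : ℝ)
    (hβ : β = (((s : ℝ) - 1) * ((k : ℝ) - s + 1) - α * ((s : ℝ) - 1)) /
               (((k : ℝ) + 1) * ((k : ℝ) - s + 1) - α * ((s : ℝ) - 1)))
    (i : ℕ) (hi1 : k ≤ i) (hi2 : i ≤ m) :
    (i : ℝ) ≤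
      ((k : ℝ) + 1) * ((s : ℝ) - 1 - β) / s +
        ((Nat.choose i (s - 1) : ℝ) / (Nat.choose k (s - 1) : ℝ)) *
          ((1 - ((s : ℝ) - 1) * β) * ((i : ℝ) - s + 1) / s + β * ((k : ℝ) - s + 2)) := by
  have hk2 : 2 ≤ k := le_trans (le_max_left _ _) hk
  have hks2 : s ^ 2 - 2 * s ≤ k := le_trans (le_max_right _ _) hk
  have hss : 2 * s ≤ s ^ 2 := by nlinarith
  have hsk : s ≤ k := by
    rcases eq_or_lt_of_le hs with h | h
    · omega
    · have h3 : 3 ≤ s := h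
      have h4 : 3 * s ≤ s * s := Nat.mul_le_mul_right s h3
      have hsq : s ^ 2 = s * s := sq s
      omega
  -- real casts
  have hS2 : (2:ℝ) ≤ (s:ℝ) := by exact_mod_cast hs
  have hKS : (s:ℝ) ≤ (k:ℝ) := by exact_mod_cast hsk
  have hKsq : ((s:ℝ))^2 - 2*(s:ℝ) ≤ (k:ℝ) := by
    have h := (Nat.cast_le (α := ℝ)).2 hks2
    rw [Nat.cast_sub hss] at h
    push_cast at h
    linarith
  have hαk : (α:ℝ) ≤ (k:ℝ) - (s:ℝ) := by
    have h : α + s ≤ k := by omega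
    have h' := (Nat.cast_le (α := ℝ)).2 h
    push_cast at h'; linarith
  have hα0 : (0:ℝ) ≤ (α:ℝ) := Nat.cast_nonneg α
  -- β bounds
  have hDpos : (0:ℝ) < ((k:ℝ)+1)*((k:ℝ)-s+1) - α*((s:ℝ)-1) := by
    nlinarith [mul_nonneg (by linarith : (0:ℝ) ≤ (k:ℝ)-s-α) (by linarith : (0:ℝ) ≤ (s:ℝ)-1),
      sq_nonneg ((k:ℝ)-s)]
  have hβ0 : 0 ≤ β := by
    rw [hβ]
    apply div_nonneg _ hDpos.le
    nlinarith [mul_nonneg (by linarith : (0:ℝ) ≤ (s:ℝ)-1) (by linarith : (0:ℝ) ≤ (k:ℝ)-s+1-α)]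
  have hb1 : ((s:ℝ)-1)*β ≤ 1 := by
    rw [hβ, ← mul_div_assoc, div_le_one hDpos]
    nlinarith [mul_nonneg (by linarith : (0:ℝ) ≤ (k:ℝ)-s+1) (by nlinarith : (0:ℝ) ≤ (k:ℝ)+1-((s:ℝ)-1)^2),
      mul_nonneg (mul_nonneg hα0 (by linarith : (0:ℝ) ≤ (s:ℝ)-1)) (by linarith : (0:ℝ) ≤ (s:ℝ)-2)]
  -- choose facts
  have hcKpos : (0:ℝ) < (Nat.choose k (s-1) : ℝ) := by
    exact_mod_cast Nat.choose_pos (by omega : s - 1 ≤ k)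
  have hid : ∀ j : ℕ, k ≤ j →
      (Nat.choose (j+1) (s-1) : ℝ) * ((j:ℝ) - s + 2) = (Nat.choose j (s-1) : ℝ) * ((j:ℝ)+1) := by
    intro j hj
    have h := Nat.choose_mul_succ_eq j (s-1)
    have hsub : j + 1 - (s - 1) = j + 2 - s := by omega
    rw [hsub] at h
    have h' := congrArg (fun n : ℕ => (n : ℝ)) h
    push_cast [Nat.cast_sub (by omega : s ≤ j + 2)] at h'
    push_cast
    linarith
  have hB : ∀ j : ℕ, k ≤ j →
      (Nat.choose k (s-1) : ℝ) * ((j:ℝ)-s+2) ≤ (Nat.choose j (s-1) : ℝ) * ((k:ℝ)-s+2) := by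
    intro j hj
    induction j, hj using Nat.le_induction with
    | base => exact le_of_eq (by ring)
    | succ j hj IH =>
      have hJ : (k:ℝ) ≤ (j:ℝ) := by exact_mod_cast hj
      have hD : (0:ℝ) < (j:ℝ) - s + 2 := by linarith
      have hid' := hid j hj
      push_cast
      apply le_of_mul_le_mul_right _ hD
      have h1 := mul_le_mul_of_nonneg_right IH (by positivity : (0:ℝ) ≤ (j:ℝ)+1)
      have h2 : (Nat.choose (j+1) (s-1) : ℝ) * ((k:ℝ)-s+2) * ((j:ℝ)-s+2)
          = (Nat.choose j (s-1) : ℝ) * ((j:ℝ)+1) * ((k:ℝ)-s+2) := by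
        linear_combination ((k:ℝ)-s+2) * hid'
      have h5 : (0:ℝ) ≤ (Nat.choose k (s-1) : ℝ) * ((j:ℝ)-s+2) * ((s:ℝ)-2) :=
        mul_nonneg (mul_nonneg hcKpos.le hD.le) (by linarith)
      linarith [h1, h2, h5]
  -- main induction
  have hQ : ∀ j : ℕ, k ≤ j →
      (s:ℝ) * (Nat.choose k (s-1) : ℝ) * (j:ℝ) ≤
        ((k:ℝ)+1) * ((s:ℝ)-1-β) * (Nat.choose k (s-1) : ℝ) +
          (Nat.choose j (s-1) : ℝ) *
            ((1-((s:ℝ)-1)*β) * ((j:ℝ)-s+1) + (s:ℝ)*β*((k:ℝ)-s+2)) := by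
    intro j hj
    induction j, hj using Nat.le_induction with
    | base => exact le_of_eq (by ring)
    | succ j hj IH =>
      have hJ : (k:ℝ) ≤ (j:ℝ) := by exact_mod_cast hj
      have hD : (0:ℝ) < (j:ℝ) - s + 2 := by linarith
      have hid' := hid j hj
      have hBj := hB j hj
      have hc0 : (0:ℝ) ≤ (Nat.choose j (s-1) : ℝ) := Nat.cast_nonneg _
      push_cast
      apply le_of_mul_le_mul_right _ hD
      have h1 := mul_le_mul_of_nonneg_right IH hD.le
      have h2 : (Nat.choose (j+1) (s-1) : ℝ) *
            ((1-((s:ℝ)-1)*β) * (((j:ℝ)+1)-s+1) + (s:ℝ)*β*((k:ℝ)-s+2)) * ((j:ℝ)-s+2)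
          = (Nat.choose j (s-1) : ℝ) * (((j:ℝ)+1) *
            ((1-((s:ℝ)-1)*β) * (((j:ℝ)+1)-s+1) + (s:ℝ)*β*((k:ℝ)-s+2))) := by
        linear_combination ((1-((s:ℝ)-1)*β) * (((j:ℝ)+1)-s+1) + (s:ℝ)*β*((k:ℝ)-s+2)) * hid'
      have h3 : (Nat.choose k (s-1) : ℝ) * ((j:ℝ)-s+2) ≤
          (Nat.choose j (s-1) : ℝ) *
            ((1-((s:ℝ)-1)*β) * ((j:ℝ)-s+2) + ((s:ℝ)-1)*β*((k:ℝ)-s+2)) := by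
        nlinarith [hBj, mul_nonneg (mul_nonneg hc0 (by linarith : (0:ℝ) ≤ 1-((s:ℝ)-1)*β))
          (by linarith : (0:ℝ) ≤ (j:ℝ)-(k:ℝ))]
      have h4 := mul_le_mul_of_nonneg_left h3 (by linarith : (0:ℝ) ≤ (s:ℝ))
      linarith [h1, h2, h4]
  -- conclude
  have hQi := hQ i hi1
  have hSpos : (0:ℝ) < (s:ℝ) := by linarith
  have hrw : ((k : ℝ) + 1) * ((s : ℝ) - 1 - β) / s +
        ((Nat.choose i (s - 1) : ℝ) / (Nat.choose k (s - 1) : ℝ)) *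
          ((1 - ((s : ℝ) - 1) * β) * ((i : ℝ) - s + 1) / s + β * ((k : ℝ) - s + 2))
      = (((k:ℝ)+1) * ((s:ℝ)-1-β) * (Nat.choose k (s-1) : ℝ) +
          (Nat.choose i (s-1) : ℝ) *
            ((1-((s:ℝ)-1)*β) * ((i:ℝ)-s+1) + (s:ℝ)*β*((k:ℝ)-s+2))) /
        ((s:ℝ) * (Nat.choose k (s-1) : ℝ)) := by
    field_simp
  rw [hrw, le_div_iff₀ (by positivity)]
  nlinarith [hQi]
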